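/- (Definability of the ideal ordering, formula (1).) Fix a signature S and let Φ be the set of all atoms X=x for X ∈ U∪V. For every causal deontic model M_D=(S,F,P,A) whose priority ordering P has domain Φ, and all exogenous settings u, u', the following are equivalent: (a) M_D satisfies the formula ⋀_{X=x∈Φ}((X=x)^u → (X=x)^{u'}) ∨ ⋁_{Y=y∈Φ}( ((Y=y)^{u'} ∧ ¬(Y=y)^u) ∧ ⋀_{Z=z∈Φ}(((Z=z)^u ∧ ¬(Z=z)^{u'}) → Z=z ≺ Y=y) ); (b) A_u ≤_P A_{u'}, where A_u and A_{u'} are the unique assignments complying with F whose exogenous values are u and u' respectively, and ≤_P is the ideal ordering induced by P. -/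

import Mathlib

/-- A signature `(U, V, R)`: finite set of exogenous variables `U`, finite set of
endogenous variables `V` (disjoint from `U`, modelled by a sum type), and for each
variable a finite nonempty range of values. -/
structure Signature where
  U : Type
  V : Type
  R : U ⊕ V → Type
  fintypeU : Fintype U
  fintypeV : Fintype V
  decEqU : DecidableEq U
  decEqV : DecidableEq V
  fintypeR : ∀ X, Fintype (R X)
  nonemptyR : ∀ X, Nonempty (R X)
  decEqR : ∀ X, DecidableEq (R X)

attribute [instance] Signature.fintypeU Signature.fintypeV Signature.decEqU
  Signature.decEqV Signature.fintypeR Signature.nonemptyR Signature.decEqR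

/-- An assignment of values to all the variables. -/
abbrev Assignment (S : Signature) : Type := ∀ X : S.U ⊕ S.V, S.R X

/-- An exogenous setting: an assignment of values to all exogenous variables. -/
abbrev ExoSetting (S : Signature) : Type := ∀ X : S.U, S.R (Sum.inl X)

/-- An assignment of values to all variables except `X` (i.e. `A^{-X}`). -/
abbrev CoAssignment (S : Signature) (X : S.U ⊕ S.V) : Type :=
  ∀ Y : S.U ⊕ S.V, Y ≠ X → S.R Y

/-- The restriction `A^{-X}` of an assignment. -/
def Assignment.minus {S : Signature} (A : Assignment S) (X : S.U ⊕ S.V) :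
    CoAssignment S X := fun Y _ => A Y

/-- A set of structural functions: for each endogenous variable `X`, a function
giving the value of `X` from the values of all the other variables. -/
abbrev StructFns (S : Signature) : Type :=
  ∀ X : S.V, CoAssignment S (Sum.inr X) → S.R (Sum.inr X)

/-- `A` complies with `F` iff `A(X) = f_X(A^{-X})` for every endogenous `X`. -/
def Complies (S : Signature) (F : StructFns S) (A : Assignment S) : Prop :=
  ∀ X : S.V, A (Sum.inr X) = F X (A.minus (Sum.inr X))

/-- `F` is recursive (acyclic): there is a strict total order on the variables such
that each `f_X` does not depend on the values of variables strictly above `X`. -/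
def Recursive (S : Signature) (F : StructFns S) : Prop :=
  ∃ lt : (S.U ⊕ S.V) → (S.U ⊕ S.V) → Prop,
    IsStrictTotalOrder (S.U ⊕ S.V) lt ∧
    ∀ X : S.V, ∀ B B' : CoAssignment S (Sum.inr X),
      (∀ Y (hne : Y ≠ Sum.inr X), lt Y (Sum.inr X) → B Y hne = B' Y hne) →
      F X B = F X B'

/-- An intervention tuple `X⃗ = x⃗`: a list of endogenous variables with values. -/
abbrev Ivn (S : Signature) : Type := List ((X : S.V) × S.R (Sum.inr X))

/-- The variables of an intervention tuple. -/
def Ivn.fsts {S : Signature} (l : Ivn S) : List S.V := l.map Sigma.fst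

/-- The variables in the tuple are pairwise distinct. -/
def Ivn.Distinct {S : Signature} (l : Ivn S) : Prop := (l.map Sigma.fst).Nodup

/-- The intervened structural functions `F_{X⃗ = x⃗}`: each `f_{X_i}` is replaced by
the constant function returning `x_i`; the other functions are unchanged. -/
noncomputable def applyIvn (S : Signature) (F : StructFns S) (l : Ivn S) : StructFns S :=
  fun X B =>
    if h : ∃ x : S.R (Sum.inr X), (⟨X, x⟩ : (Y : S.V) × S.R (Sum.inr Y)) ∈ l then h.choose
    else F X B

/-- Formulas of the language `L_D`:
atoms `X = x`, negation, conjunction, intervention formulas `[X⃗=x⃗]φ`,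
priority formulas `X=x ≺ Y=y`, and context formulas `φ^u`. -/
inductive Formula (S : Signature) : Type where
  | atom (X : S.U ⊕ S.V) (x : S.R X) : Formula S
  | neg (φ : Formula S) : Formula S
  | and (φ ψ : Formula S) : Formula S
  | intervene (l : Ivn S) (φ : Formula S) : Formula S
  | prec (X : S.U ⊕ S.V) (x : S.R X) (Y : S.U ⊕ S.V) (y : S.R Y) : Formula S
  | ctx (u : ExoSetting S) (φ : Formula S) : Formula S

def Formula.imp {S : Signature} (φ ψ : Formula S) : Formula S := .neg (.and φ (.neg ψ))

def Formula.or {S : Signature} (φ ψ : Formula S) : Formula S := .neg (.and (.neg φ) (.neg ψ))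

def Formula.iffF {S : Signature} (φ ψ : Formula S) : Formula S := .and (φ.imp ψ) (ψ.imp φ)

/-- Atoms `X = x`. -/
abbrev SAtom (S : Signature) : Type := (X : S.U ⊕ S.V) × S.R X

/-- A priority structure `P = (Φ, ≪)`: a set of atoms together with a
priority relation among atoms. -/
structure Priority (S : Signature) where
  dom : Set (SAtom S)
  lt : SAtom S → SAtom S → Prop

/-- The priority relation is a strict partial order (asymmetric and transitive). -/
def Priority.Strict {S : Signature} (P : Priority S) : Prop :=
  (∀ a b, P.lt a b → ¬ P.lt b a) ∧ (∀ a b c, P.lt a b → P.lt b c → P.lt a c)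

open Classical in
/-- The unique assignment complying with `F` whose values on the exogenous
variables are given by `u` (when `F` is recursive it exists and is unique). -/
noncomputable def solve (S : Signature) (F : StructFns S) (u : ExoSetting S) : Assignment S :=
  if h : ∃ A : Assignment S, Complies S F A ∧ ∀ X : S.U, A (Sum.inl X) = u X then h.choose
  else fun X => Classical.arbitrary (S.R X)

/-- Truth of a formula at structural functions `F`, priority `P` and actual
assignment `A`. -/
def Sat (S : Signature) : StructFns S → Priority S → Assignment S → Formula S → Prop
  | _, _, A, .atom X x => A X = x
  | F, P, A, .neg φ => ¬ Sat S F P A φ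
  | F, P, A, .and φ ψ => Sat S F P A φ ∧ Sat S F P A ψ
  | F, P, A, .intervene l φ =>
      Sat S (applyIvn S F l) P (solve S (applyIvn S F l) (fun X => A (Sum.inl X))) φ
  | _, P, _, .prec X x Y y => P.lt ⟨X, x⟩ ⟨Y, y⟩
  | F, P, _, .ctx u φ => Sat S F P (solve S F u) φ

/-- A causal deontic model: recursive structural functions, a priority
structure which is a strict partial order, and an actual assignment complying
with the structural functions. -/
structure CDModel (S : Signature) where
  F : StructFns S
  P : Priority S
  A : Assignment S
  recF : Recursive S F
  strictP : P.Strict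
  compliesA : Complies S F A

/-- Truth in a causal deontic model. -/
def CDModel.Sat {S : Signature} (M : CDModel S) (φ : Formula S) : Prop :=
  _root_.Sat S M.F M.P M.A φ

/-- A falsum, available whenever the signature has at least one variable. -/
noncomputable def botF (S : Signature) (h : Nonempty (S.U ⊕ S.V)) : Formula S :=
  Formula.and (.atom (@Classical.arbitrary _ h) (Classical.arbitrary _))
    (.neg (.atom (@Classical.arbitrary _ h) (Classical.arbitrary _)))

/-- A verum. -/
noncomputable def topF (S : Signature) (h : Nonempty (S.U ⊕ S.V)) : Formula S :=
  .neg (botF S h)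

/-- Finite conjunction. -/
noncomputable def bigAnd (S : Signature) (h : Nonempty (S.U ⊕ S.V))
    (L : List (Formula S)) : Formula S :=
  L.foldr Formula.and (topF S h)

/-- Finite disjunction. -/
noncomputable def bigOr (S : Signature) (h : Nonempty (S.U ⊕ S.V))
    (L : List (Formula S)) : Formula S :=
  L.foldr Formula.or (botF S h)

/-- The ideal ordering `≤_P` induced by a priority structure with domain `dom` and
priority relation `lt`: `A ≤_P A'` iff either every atom of the domain satisfied by
`A` is satisfied by `A'`, or there is an atom `Y=y` in the domain with `A(Y) ≠ y`,
`A'(Y) = y` such that every atom `Z=z` of the domain with `A(Z) = z` and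
`A'(Z) ≠ z` has strictly lower priority than `Y=y`. -/
def IdealLe (S : Signature) (dom : Set (SAtom S)) (lt : SAtom S → SAtom S → Prop)
    (A A' : Assignment S) : Prop :=
  (∀ a ∈ dom, A a.1 = a.2 → A' a.1 = a.2) ∨
  ∃ b ∈ dom, A b.1 ≠ b.2 ∧ A' b.1 = b.2 ∧
    ∀ c ∈ dom, A c.1 = c.2 → A' c.1 ≠ c.2 → lt c b

/-- The list of all atoms of the signature. -/
noncomputable def allAtoms (S : Signature) : List (SAtom S) :=
  (Finset.univ : Finset (SAtom S)).toList

/-- Formula (1), defining `U⃗=u ≤ U⃗=u'`. -/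
noncomputable def formula1 (S : Signature) (h : Nonempty (S.U ⊕ S.V))
    (u u' : ExoSetting S) : Formula S :=
  Formula.or
    (bigAnd S h ((allAtoms S).map fun a =>
      (Formula.ctx u (.atom a.1 a.2)).imp (Formula.ctx u' (.atom a.1 a.2))))
    (bigOr S h ((allAtoms S).map fun b =>
      Formula.and
        (Formula.and (Formula.ctx u' (.atom b.1 b.2))
          (.neg (Formula.ctx u (.atom b.1 b.2))))
        (bigAnd S h ((allAtoms S).map fun c =>
          (Formula.and (Formula.ctx u (.atom c.1 c.2))
            (.neg (Formula.ctx u' (.atom c.1 c.2)))).imp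
              (Formula.prec c.1 c.2 b.1 b.2)))))

section Aux

theorem complies_unique (S : Signature) (F : StructFns S) (hF : Recursive S F)
    (A A' : Assignment S) (hA : Complies S F A) (hA' : Complies S F A')
    (hexo : ∀ X : S.U, A (Sum.inl X) = A' (Sum.inl X)) : A = A' := by
  obtain ⟨lt, hsto, hdep⟩ := hF
  haveI : IsTrans _ lt := ⟨hsto.trans⟩
  haveI : IsIrrefl _ lt := ⟨hsto.irrefl⟩
  have wf : WellFounded lt := Finite.wellFounded_of_trans_of_irrefl lt
  funext Y
  induction Y using wf.induction with
  | _ Y ih =>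
    cases Y with
    | inl X => exact hexo X
    | inr X =>
      rw [hA X, hA' X]
      exact hdep X _ _ fun Z hne hlt => ih Z hlt

theorem solve_eq (S : Signature) (F : StructFns S) (hF : Recursive S F)
    (u : ExoSetting S) (A : Assignment S) (hA : Complies S F A)
    (hu : ∀ X : S.U, A (Sum.inl X) = u X) : solve S F u = A := by
  unfold solve
  have hex : ∃ B : Assignment S, Complies S F B ∧ ∀ X : S.U, B (Sum.inl X) = u X := ⟨A, hA, hu⟩
  rw [dif_pos hex]
  exact complies_unique S F hF _ A hex.choose_spec.1 hA
    (fun X => (hex.choose_spec.2 X).trans (hu X).symm)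

theorem sat_botF (S : Signature) (h : Nonempty (S.U ⊕ S.V)) (F : StructFns S)
    (P : Priority S) (A : Assignment S) : ¬ Sat S F P A (botF S h) := by
  rintro ⟨h1, h2⟩; exact h2 h1

theorem sat_bigAnd (S : Signature) (h : Nonempty (S.U ⊕ S.V)) (F : StructFns S)
    (P : Priority S) (A : Assignment S) (L : List (Formula S)) :
    Sat S F P A (bigAnd S h L) ↔ ∀ φ ∈ L, Sat S F P A φ := by
  induction L with
  | nil => simp [bigAnd, topF, Sat, sat_botF]
  | cons φ L ih =>
    simp only [bigAnd, List.foldr] at *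
    constructor
    · rintro ⟨h1, h2⟩ ψ hψ
      rcases List.mem_cons.1 hψ with rfl | hψ
      · exact h1
      · exact ih.1 h2 ψ hψ
    · intro hall
      exact ⟨hall φ (List.mem_cons_self), ih.2 fun ψ hψ => hall ψ (List.mem_cons_of_mem _ hψ)⟩

theorem sat_bigOr (S : Signature) (h : Nonempty (S.U ⊕ S.V)) (F : StructFns S)
    (P : Priority S) (A : Assignment S) (L : List (Formula S)) :
    Sat S F P A (bigOr S h L) ↔ ∃ φ ∈ L, Sat S F P A φ := by
  induction L with
  | nil => simp [bigOr, sat_botF S h F P A]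
  | cons φ L ih =>
    simp only [bigOr, List.foldr] at *
    constructor
    · intro hor
      simp only [Formula.or, Sat, not_and_or, not_not] at hor
      rcases hor with h1 | h1
      · exact ⟨φ, List.mem_cons_self, h1⟩
      · obtain ⟨ψ, hψ, hs⟩ := ih.1 h1
        exact ⟨ψ, List.mem_cons_of_mem _ hψ, hs⟩
    · rintro ⟨ψ, hψ, hs⟩
      simp only [Formula.or, Sat, not_and_or, not_not]
      rcases List.mem_cons.1 hψ with rfl | hψ
      · exact Or.inl hs
      · exact Or.inr (ih.2 ⟨ψ, hψ, hs⟩)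

theorem sat_imp (S : Signature) (F : StructFns S) (P : Priority S) (A : Assignment S)
    (φ ψ : Formula S) : Sat S F P A (φ.imp ψ) ↔ (Sat S F P A φ → Sat S F P A ψ) := by
  simp only [Formula.imp, Sat, not_and_or, not_not]
  tauto

theorem mem_allAtoms (S : Signature) (a : SAtom S) : a ∈ allAtoms S := by
  simp [allAtoms]

end Aux

/-- definability of the ideal ordering, formula (1): for every
causal deontic model whose priority ordering has as domain the set of all atoms,
and all exogenous settings `u, u'`, the model satisfies formula (1) iff
`A_u ≤_P A_{u'}`, where `A_u`, `A_{u'}` are the unique assignments complying with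
`F` whose exogenous values are `u` resp. `u'`, and `≤_P` is the ideal ordering
induced by `P`. -/
theorem formula1_defines_ideal_ordering (S : Signature) (h : Nonempty (S.U ⊕ S.V))
    (M : CDModel S) (hdom : M.P.dom = Set.univ) (u u' : ExoSetting S)
    (A₁ A₂ : Assignment S)
    (hA₁ : Complies S M.F A₁) (hu₁ : ∀ X : S.U, A₁ (Sum.inl X) = u X)
    (hA₂ : Complies S M.F A₂) (hu₂ : ∀ X : S.U, A₂ (Sum.inl X) = u' X) :
    M.Sat (formula1 S h u u') ↔ IdealLe S M.P.dom M.P.lt A₁ A₂ := by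
    classical
  have e1 : solve S M.F u = A₁ := solve_eq S M.F M.recF u A₁ hA₁ hu₁
  have e2 : solve S M.F u' = A₂ := solve_eq S M.F M.recF u' A₂ hA₂ hu₂
  have hctx : ∀ (v : ExoSetting S) (B : Assignment S), solve S M.F v = B →
      ∀ (a : SAtom S), Sat S M.F M.P M.A (Formula.ctx v (.atom a.1 a.2)) ↔ B a.1 = a.2 := by
    intro v B hB a
    simp [Sat, hB]
  unfold CDModel.Sat formula1
  rw [show (Sat S M.F M.P M.A
      (Formula.or (bigAnd S h _) (bigOr S h _)) ↔ _) from by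
    simp only [Formula.or, Sat, not_and_or, not_not]; exact Iff.rfl]
  constructor
  · rintro (h1 | h1)
    · left
      intro a _ ha
      rw [sat_bigAnd] at h1
      have := h1 _ (List.mem_map_of_mem (mem_allAtoms S a))
      rw [sat_imp, hctx u A₁ e1 a, hctx u' A₂ e2 a] at this
      exact this ha
    · right
      rw [sat_bigOr] at h1
      obtain ⟨φ, hφ, hs⟩ := h1
      obtain ⟨b, _, rfl⟩ := List.mem_map.1 hφ
      obtain ⟨⟨hb1, hb2⟩, hb3⟩ := hs
      rw [hctx u' A₂ e2 b] at hb1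
      rw [show (Sat S M.F M.P M.A (Formula.neg (Formula.ctx u (.atom b.1 b.2))) ↔
          ¬ A₁ b.1 = b.2) from by rw [Sat, hctx u A₁ e1 b]] at hb2
      refine ⟨b, hdom ▸ Set.mem_univ b, hb2, hb1, ?_⟩
      intro c _ hc1 hc2
      rw [sat_bigAnd] at hb3
      have := hb3 _ (List.mem_map_of_mem (mem_allAtoms S c))
      rw [sat_imp] at this
      exact this ⟨(hctx u A₁ e1 c).2 hc1,
        fun hh => hc2 ((hctx u' A₂ e2 c).1 hh)⟩
  · rintro (h1 | ⟨b, _, hb1, hb2, hb3⟩)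
    · left
      rw [sat_bigAnd]
      intro φ hφ
      obtain ⟨a, _, rfl⟩ := List.mem_map.1 hφ
      rw [sat_imp, hctx u A₁ e1 a, hctx u' A₂ e2 a]
      exact h1 a (hdom ▸ Set.mem_univ a)
    · right
      rw [sat_bigOr]
      refine ⟨_, List.mem_map_of_mem (mem_allAtoms S b), ?_⟩
      refine ⟨⟨(hctx u' A₂ e2 b).2 hb2, ?_⟩, ?_⟩
      · rw [show (Sat S M.F M.P M.A (Formula.neg (Formula.ctx u (.atom b.1 b.2))) ↔
            ¬ A₁ b.1 = b.2) from by rw [Sat, hctx u A₁ e1 b]]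
        exact hb1
      · rw [sat_bigAnd]
        intro φ hφ
        obtain ⟨c, _, rfl⟩ := List.mem_map.1 hφ
        rw [sat_imp]
        rintro ⟨hc1, hc2⟩
        rw [hctx u A₁ e1 c] at hc1
        have hc2' : A₂ c.1 ≠ c.2 := fun hh => hc2 ((hctx u' A₂ e2 c).2 hh)
        exact hb3 c (hdom ▸ Set.mem_univ c) hc1 hc2'
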